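/- Let X be a Hilbert space and T : X ⇉ X with (x̄, v̄) ∈ gph T and gph T locally closed around (x̄, v̄). Suppose T is locally hypomonotone around (x̄, v̄) with modulus r > 0. Then for every σ > r, the mapping (T + σI)⁻¹ has a localization R_σ around (v̄ + σx̄, x̄) that is single-valued on its domain; moreover, any two points (vᵢ, xᵢ) ∈ gph R_σ satisfy ‖v₁ − v₂‖ ≥ (σ − r)‖x₁ − x₂‖. -/
import Mathlib


open Set Filter Topology RealInnerProductSpace

variable {X : Type*} [NormedAddCommGroup X] [InnerProductSpace ℝ X] [CompleteSpace X]

/-- Graph of a set-valued map. -/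
def gph (T : X → Set X) : Set (X × X) := {p | p.2 ∈ T p.1}

/-- Monotone set-valued operator on a Hilbert space. -/
def Mono (T : X → Set X) : Prop :=
  ∀ p ∈ gph T, ∀ q ∈ gph T, 0 ≤ ⟪p.2 - q.2, p.1 - q.1⟫

/-- Maximal monotone operator. -/
def MaxMono (T : X → Set X) : Prop :=
  Mono T ∧ ∀ S : X → Set X, Mono S → gph T ⊆ gph S → gph S = gph T

/-- σ-strongly monotone operator. -/
def StrMono (σ : ℝ) (T : X → Set X) : Prop :=
  ∀ p ∈ gph T, ∀ q ∈ gph T, σ * ‖p.1 - q.1‖ ^ 2 ≤ ⟪p.2 - q.2, p.1 - q.1⟫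

/-- σ-strongly maximal monotone operator. -/
def StrMaxMono (σ : ℝ) (T : X → Set X) : Prop :=
  StrMono σ T ∧ ∀ S : X → Set X, StrMono σ S → gph T ⊆ gph S → gph S = gph T

/-- Monotone with respect to a set `W ⊆ X × X`. -/
def MonoOn' (T : X → Set X) (W : Set (X × X)) : Prop :=
  ∀ p ∈ gph T ∩ W, ∀ q ∈ gph T ∩ W, 0 ≤ ⟪p.2 - q.2, p.1 - q.1⟫

/-- σ-strongly monotone with respect to a set `W ⊆ X × X`. -/
def StrMonoOn' (σ : ℝ) (T : X → Set X) (W : Set (X × X)) : Prop :=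
  ∀ p ∈ gph T ∩ W, ∀ q ∈ gph T ∩ W, σ * ‖p.1 - q.1‖ ^ 2 ≤ ⟪p.2 - q.2, p.1 - q.1⟫

/-- Locally maximal monotone of type (A) with respect to `W`. -/
def LocMaxA (T : X → Set X) (W : Set (X × X)) : Prop :=
  MonoOn' T W ∧ ∀ S : X → Set X, MonoOn' S W → gph T ∩ W ⊆ gph S ∩ W →
    gph S ∩ W = gph T ∩ W

/-- Locally maximal monotone of type (A) around a graph point. -/
def LocMaxAAt (T : X → Set X) (x v : X) : Prop :=
  ∃ U ∈ 𝓝 x, ∃ V ∈ 𝓝 v, LocMaxA T (U ×ˢ V)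

/-- Locally maximal monotone of type (B) around a graph point. -/
def LocMaxBAt (T : X → Set X) (x v : X) : Prop :=
  ∃ U ∈ 𝓝 x, ∃ V ∈ 𝓝 v, ∃ G : X → Set X, MaxMono G ∧
    gph G ∩ U ×ˢ V = gph T ∩ U ×ˢ V

/-- Locally monotone around a graph point. -/
def LocMonoAt (T : X → Set X) (x v : X) : Prop :=
  ∃ U ∈ 𝓝 x, ∃ V ∈ 𝓝 v, ∃ G : X → Set X, Mono G ∧
    gph G ∩ U ×ˢ V = gph T ∩ U ×ˢ V

/-- Locally strongly maximal monotone of type (A) around a graph point with modulus σ. -/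
def LocStrMaxAAt (σ : ℝ) (T : X → Set X) (x v : X) : Prop :=
  ∃ U ∈ 𝓝 x, ∃ V ∈ 𝓝 v, StrMonoOn' σ T (U ×ˢ V) ∧
    ∀ S : X → Set X, MonoOn' S (U ×ˢ V) → gph T ∩ U ×ˢ V ⊆ gph S ∩ U ×ˢ V →
      gph S ∩ U ×ˢ V = gph T ∩ U ×ˢ V

/-- Locally strongly maximal monotone of type (B) around a graph point with modulus σ. -/
def LocStrMaxBAt (σ : ℝ) (T : X → Set X) (x v : X) : Prop :=
  ∃ U ∈ 𝓝 x, ∃ V ∈ 𝓝 v, ∃ G : X → Set X, StrMaxMono σ G ∧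
    gph G ∩ U ×ˢ V = gph T ∩ U ×ˢ V

/-- Pointwise sum of set-valued maps. -/
def addMap (T S : X → Set X) : X → Set X :=
  fun x => {v | ∃ a ∈ T x, ∃ b ∈ S x, v = a + b}

/-- The shift `T + σ I`. -/
def shiftI (σ : ℝ) (T : X → Set X) : X → Set X :=
  fun x => (fun v => v + σ • x) '' T x

/-- Set-valued inverse. -/
def invMap (T : X → Set X) : X → Set X := fun v => {x | v ∈ T x}

/-- Resolvent `(I + λ T)⁻¹` as a set-valued map. -/
def res (lam : ℝ) (T : X → Set X) : X → Set X :=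
  fun y => {x | ∃ v ∈ T x, y = x + lam • v}

/-- `F` has a single-valued localization around `(ȳ, x̄) ∈ gph F`. -/
def HasSVLoc (F : X → Set X) (ybar xbar : X) : Prop :=
  ∃ W ∈ 𝓝 ybar, ∃ Q ∈ 𝓝 xbar, ∃ f : X → X, (∀ y ∈ W, f y ∈ Q) ∧
    ∀ y x, (x ∈ F y ∧ y ∈ W ∧ x ∈ Q) ↔ (y ∈ W ∧ x = f y)

/-- `F` has a continuous single-valued localization around `(ȳ, x̄) ∈ gph F`. -/
def HasCSVLoc (F : X → Set X) (ybar xbar : X) : Prop :=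
  ∃ W ∈ 𝓝 ybar, ∃ Q ∈ 𝓝 xbar, ∃ f : X → X, ContinuousOn f W ∧ (∀ y ∈ W, f y ∈ Q) ∧
    ∀ y x, (x ∈ F y ∧ y ∈ W ∧ x ∈ Q) ↔ (y ∈ W ∧ x = f y)

/-- Hypomonotone with modulus `r` with respect to `W`. -/
def HypoOn (r : ℝ) (T : X → Set X) (W : Set (X × X)) : Prop :=
  ∀ p ∈ gph T ∩ W, ∀ q ∈ gph T ∩ W,
    -(r * ‖p.1 - q.1‖ ^ 2) ≤ ⟪p.2 - q.2, p.1 - q.1⟫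

/-- Locally hypomonotone with modulus `r` around a graph point. -/
def LocHypoAt (r : ℝ) (T : X → Set X) (x v : X) : Prop :=
  ∃ W ∈ 𝓝 ((x, v) : X × X), HypoOn r T W

/-- The regular (Fréchet) normal cone to `Ω ⊆ X × X` at `p`, using the sum norm. -/
def rnc (Ω : Set (X × X)) (p : X × X) : Set (X × X) :=
  {q | ∀ ε > 0, ∀ᶠ u in 𝓝[Ω] p,
    ⟪q.1, u.1 - p.1⟫ + ⟪q.2, u.2 - p.2⟫ ≤ ε * (‖u.1 - p.1‖ + ‖u.2 - p.2‖)}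

/-- The regular coderivative of `F` at `(x, v) ∈ gph F` applied to `w`. -/
def coderiv (F : X → Set X) (x v w : X) : Set X :=
  {z | ((z, -w) : X × X) ∈ rnc (gph F) (x, v)}

/-- The graph of `T` is locally closed around `p`. -/
def LocClosedAt (Ω : Set (X × X)) (p : X × X) : Prop :=
  ∃ ε > 0, IsClosed (Ω ∩ Metric.closedBall p ε)

/-- The transvection `Δ_σ(x, v) = (v + σx, x)`. -/
def transvect (σ : ℝ) : X × X → X × X := fun p => (p.2 + σ • p.1, p.1)

/-- The graph of the localization `R_σ` of `(T + σI)⁻¹`: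
`gph R_σ = gph (T + σI)⁻¹ ∩ Δ_σ(W)`. -/
def RsigmaGph (σ : ℝ) (T : X → Set X) (W : Set (X × X)) : Set (X × X) :=
  gph (invMap (shiftI σ T)) ∩ transvect σ '' W

/-- Under local hypomonotonicity with modulus `r`, for every `σ > r` the mapping
`(T + σI)⁻¹` has a localization around `(v̄ + σx̄, x̄)` that is single-valued on its
domain and satisfies `‖v₁ − v₂‖ ≥ (σ − r)‖x₁ − x₂‖` on its graph. -/
theorem stmt_16 (T : X → Set X) (xbar vbar : X) (hx : vbar ∈ T xbar)
    (hcl : LocClosedAt (gph T) (xbar, vbar)) (r : ℝ) (hr : 0 < r)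
    (W : Set (X × X)) (hWo : IsOpen W) (hWmem : (xbar, vbar) ∈ W)
    (hhypo : HypoOn r T W) (σ : ℝ) (hσ : r < σ) :
    (vbar + σ • xbar, xbar) ∈ RsigmaGph σ T W ∧
    transvect σ '' W ∈ 𝓝 ((vbar + σ • xbar, xbar) : X × X) ∧
    (∀ p ∈ RsigmaGph σ T W, ∀ q ∈ RsigmaGph σ T W, p.1 = q.1 → p.2 = q.2) ∧
    (∀ p ∈ RsigmaGph σ T W, ∀ q ∈ RsigmaGph σ T W,
      (σ - r) * ‖p.2 - q.2‖ ≤ ‖p.1 - q.1‖) := by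
  have himg : transvect σ '' W = (fun p : X × X => ((p.2, p.1 - σ • p.2) : X × X)) ⁻¹' W := by
    ext ⟨y, x⟩
    constructor
    · rintro ⟨⟨a, b⟩, hab, heq⟩
      simp only [transvect, Prod.mk.injEq] at heq
      obtain ⟨h1, h2⟩ := heq
      subst h2
      have hb : b = y - σ • a := by rw [← h1]; abel
      show ((a, y - σ • a) : X × X) ∈ W
      rwa [← hb]
    · intro h
      exact ⟨(x, y - σ • x), h, by simp [transvect]⟩
  have key : ∀ p ∈ RsigmaGph σ T W, (p.2, p.1 - σ • p.2) ∈ gph T ∩ W := by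
    rintro ⟨y, x⟩ ⟨hg, himgp⟩
    rw [himg] at himgp
    obtain ⟨v, hv, hvy⟩ := hg
    have hveq : v = y - σ • x := eq_sub_of_add_eq (by simpa using hvy)
    exact ⟨by simpa [gph, ← hveq] using hv, himgp⟩
  have est : ∀ p ∈ RsigmaGph σ T W, ∀ q ∈ RsigmaGph σ T W,
      (σ - r) * ‖p.2 - q.2‖ ≤ ‖p.1 - q.1‖ := by
    intro p hp q hq
    have h := hhypo _ (key p hp) _ (key q hq)
    simp only at h
    have hin : ⟪p.1 - σ • p.2 - (q.1 - σ • q.2), p.2 - q.2⟫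
        = ⟪p.1 - q.1, p.2 - q.2⟫ - σ * ‖p.2 - q.2‖ ^ 2 := by
      have : p.1 - σ • p.2 - (q.1 - σ • q.2) = (p.1 - q.1) - σ • (p.2 - q.2) := by
        rw [smul_sub]; abel
      rw [this, inner_sub_left, real_inner_smul_left, real_inner_self_eq_norm_sq]
    rw [hin] at h
    have hcs : ⟪p.1 - q.1, p.2 - q.2⟫ ≤ ‖p.1 - q.1‖ * ‖p.2 - q.2‖ :=
      real_inner_le_norm _ _
    rcases eq_or_lt_of_le (norm_nonneg (p.2 - q.2)) with h0 | h0
    · rw [← h0]; simpa using norm_nonneg (p.1 - q.1)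
    · nlinarith [norm_nonneg (p.1 - q.1)]
  refine ⟨⟨⟨vbar, hx, rfl⟩, ⟨(xbar, vbar), hWmem, rfl⟩⟩, ?_, ?_, est⟩
  · rw [himg]
    refine (hWo.preimage (by fun_prop)).mem_nhds ?_
    simp [hWmem]
  · intro p hp q hq hpq
    have := est p hp q hq
    rw [hpq] at this
    simp only [sub_self, norm_zero] at this
    have h2 : ‖p.2 - q.2‖ ≤ 0 := by nlinarith
    have := le_antisymm h2 (norm_nonneg _)
    rwa [norm_sub_eq_zero_iff] at this
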